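/- Let c be a nonzero codeword of the Grassmann code C(ℓ,m) and let Y = supp(c). For every T ∈ G(ℓ+1,m), the top clique ⟨T] = { W ∈ G(ℓ,m) : W ⊆ T } meets Y in exactly 0 or exactly q^ℓ points. -/

import Mathlib

open Finset Module

/-- The row space of an `ℓ × m` matrix. -/
def rowSpan (F : Type*) [Field F] {l m : ℕ} (M : Matrix (Fin l) (Fin m) F) :
    Submodule F (Fin m → F) :=
  Submodule.span F (Set.range fun i : Fin l => M i)

/-- The Plücker coordinate of an `ℓ × m` matrix at an `ℓ`-subset `I` of the columns:
the `ℓ × ℓ` minor on the columns of `I` (taken in increasing order). -/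
def plucker (F : Type*) [Field F] {l m : ℕ} (M : Matrix (Fin l) (Fin m) F)
    (I : {s : Finset (Fin m) // s.card = l}) : F :=
  (M.submatrix id fun j : Fin l => ((I.1.orderIsoOfFin I.2 j : Fin m))).det

/-- A line of the Grassmannian `G(ℓ, m)` over `F`: the set of `ℓ`-dimensional subspaces `W`
with `Z ≤ W ≤ Z'` for some nested subspaces `Z` of dimension `ℓ-1` and `Z'` of dimension
`ℓ+1`. -/
def IsGrLine (F : Type*) [Field F] (l m : ℕ) (L : Set (Submodule F (Fin m → F))) : Prop :=
  ∃ Z Z' : Submodule F (Fin m → F), finrank F Z = l - 1 ∧ finrank F Z' = l + 1 ∧ Z ≤ Z' ∧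
    L = {W : Submodule F (Fin m → F) | finrank F W = l ∧ Z ≤ W ∧ W ≤ Z'}

/-- The support of the codeword of the Grassmann code `C(ℓ,m)` given by the coefficient
vector `a` of a linear combination of Plücker coordinates, where `M` assigns to each
subspace a representative matrix: the set of `ℓ`-dimensional subspaces where the
evaluation is nonzero. -/
def grSupport (F : Type*) [Field F] {l m : ℕ}
    (M : Submodule F (Fin m → F) → Matrix (Fin l) (Fin m) F)
    (a : {s : Finset (Fin m) // s.card = l} → F) : Set (Submodule F (Fin m → F)) :=
  {W | finrank F W = l ∧ ∑ I : {s : Finset (Fin m) // s.card = l}, a I * plucker F (M W) I ≠ 0}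


section GrassmannAux

open Matrix

set_option linter.unusedSectionVars false

variable {F : Type*} [Field F]


/-- dot product with a fixed vector, as a linear map. -/
noncomputable def dotLin {n : ℕ} (v : Fin n → F) : (Fin n → F) →ₗ[F] F where
  toFun u := dotProduct u v
  map_add' x y := add_dotProduct x y v
  map_smul' c x := smul_dotProduct c x v

@[simp] lemma dotLin_apply {n : ℕ} (v u : Fin n → F) :
    dotLin v u = dotProduct u v := rfl

lemma of_cons_eq_updateRow {l : ℕ} (R : Matrix (Fin l) (Fin (l + 1)) F)
    (w x : Fin (l + 1) → F) :
    (Matrix.of (Fin.cons x R) : Matrix (Fin (l + 1)) (Fin (l + 1)) F) =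
      (Matrix.of (Fin.cons w R) : Matrix (Fin (l + 1)) (Fin (l + 1)) F).updateRow 0 x := by
  ext i j
  induction i using Fin.cases with
  | zero => simp; rfl
  | succ i => simp [Matrix.updateRow_ne (Fin.succ_ne_zero i)]; rfl

/-- determinant of the square matrix obtained by prepending a row, as a linear map
in that row. -/
noncomputable def consDet {l : ℕ} (R : Matrix (Fin l) (Fin (l + 1)) F) :
    (Fin (l + 1) → F) →ₗ[F] F where
  toFun v := (Matrix.of (Fin.cons v R) : Matrix (Fin (l + 1)) (Fin (l + 1)) F).det
  map_add' x y := by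
    show (Matrix.of (Fin.cons (x+y) R) : Matrix (Fin (l + 1)) (Fin (l + 1)) F).det = _
    rw [of_cons_eq_updateRow R 0 (x + y), Matrix.det_updateRow_add,
      ← of_cons_eq_updateRow R 0 x, ← of_cons_eq_updateRow R 0 y]
  map_smul' c x := by
    show (Matrix.of (Fin.cons (c • x) R) : Matrix (Fin (l + 1)) (Fin (l + 1)) F).det = _
    rw [of_cons_eq_updateRow R 0 (c • x), Matrix.det_updateRow_smul,
      ← of_cons_eq_updateRow R 0 x]
    rfl

@[simp] lemma consDet_apply {l : ℕ} (R : Matrix (Fin l) (Fin (l + 1)) F)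
    (v : Fin (l + 1) → F) :
    consDet R v = (Matrix.of (Fin.cons v R) : Matrix (Fin (l + 1)) (Fin (l + 1)) F).det := rfl

lemma block_det {l : ℕ} (C : Matrix (Fin l) (Fin (l + 1)) F) (u v : Fin (l + 1) → F)
    (X : Matrix (Fin (l + 1)) (Fin l) F) (hv : C.mulVec v = 0) :
    dotProduct u v * (C * X).det =
      (Matrix.of (Fin.cons u C) : Matrix (Fin (l + 1)) (Fin (l + 1)) F).det * consDet Xᵀ v := by
  classical
  set Chat : Matrix (Fin (l + 1)) (Fin (l + 1)) F := Matrix.of (Fin.cons u C)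
  set Xhat : Matrix (Fin (l + 1)) (Fin (l + 1)) F :=
    (Matrix.of (Fin.cons v Xᵀ) : Matrix (Fin (l + 1)) (Fin (l + 1)) F)ᵀ
  have hXdet : consDet Xᵀ v = Xhat.det := by
    rw [consDet_apply, ← Matrix.det_transpose]
  set e : Fin 1 ⊕ Fin l ≃ Fin (l + 1) := finSumFinEquiv.trans (finCongr (Nat.add_comm 1 l))
  have he1 : ∀ i : Fin 1, e (Sum.inl i) = 0 := by
    intro i
    have : (i : ℕ) = 0 := by omega
    ext
    simp [e, this]
  have he2 : ∀ j : Fin l, e (Sum.inr j) = Fin.succ j := by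
    intro j
    ext
    simp [e, Nat.add_comm 1 (j : ℕ)]
  have hP : (Chat * Xhat).submatrix e e =
      Matrix.fromBlocks
        (Matrix.of fun _ _ : Fin 1 => dotProduct u v)
        (Matrix.of fun (_ : Fin 1) (j : Fin l) => dotProduct u (fun k => X k j))
        0 (C * X) := by
    ext i j
    have key : ∀ (si sj : Fin (l + 1)), (Chat * Xhat) si sj =
        ∑ k, (Fin.cons u C : Fin (l + 1) → Fin (l + 1) → F) si k *
          (Fin.cons v Xᵀ : Fin (l + 1) → Fin (l + 1) → F) sj k := by
      intro si sj
      rw [Matrix.mul_apply]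
      rfl
    rcases i with i | i <;> rcases j with j | j <;>
      simp only [Matrix.submatrix_apply, he1, he2, key, Fin.cons_zero, Fin.cons_succ,
        Matrix.fromBlocks_apply₁₁, Matrix.fromBlocks_apply₁₂, Matrix.fromBlocks_apply₂₁,
        Matrix.fromBlocks_apply₂₂, Matrix.of_apply, Matrix.zero_apply]
    · rfl
    · simp [dotProduct, Matrix.transpose_apply]; rfl
    · have := congr_fun hv i
      exact (by simpa [Matrix.mulVec, dotProduct] using this : ∑ x, C i x * v x = 0)
    · simp [Matrix.mul_apply, dotProduct, Matrix.transpose_apply]; rfl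
  have h1 : (Chat * Xhat).det = dotProduct u v * (C * X).det := by
    rw [← Matrix.det_submatrix_equiv_self e, hP, Matrix.det_fromBlocks_zero₂₁]
    congr 1
    simp [Matrix.det_fin_one]
  rw [← h1, Matrix.det_mul, hXdet]


lemma funct_prop {V : Type*} [AddCommGroup V] [Module F V] {f g : V →ₗ[F] F}
    (hk : LinearMap.ker f = LinearMap.ker g) (hf : f ≠ 0) :
    ∃ c : F, c ≠ 0 ∧ g = c • f := by
  obtain ⟨x, hx⟩ : ∃ x, f x ≠ 0 := by
    by_contra h
    push_neg at h
    exact hf (LinearMap.ext fun y => by simpa using h y)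
  refine ⟨g x / f x, ?_, ?_⟩
  · intro hc
    have hg0 : g x = 0 := by
      field_simp at hc
      simpa using hc
    have hxk : x ∈ LinearMap.ker g := hg0
    rw [← hk] at hxk
    exact hx hxk
  · ext y
    have hmem : y - (f y / f x) • x ∈ LinearMap.ker f := by
      rw [LinearMap.mem_ker, f.map_sub, f.map_smul, smul_eq_mul, sub_eq_zero]
      field_simp
    rw [hk] at hmem
    have h0 : g (y - (f y / f x) • x) = 0 := hmem
    rw [g.map_sub, g.map_smul, sub_eq_zero] at h0
    rw [LinearMap.smul_apply, smul_eq_mul, h0, smul_eq_mul]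
    field_simp
  
lemma finrank_ker_funct {n : ℕ} (f : (Fin (n + 1) → F) →ₗ[F] F) (hf : f ≠ 0) :
    finrank F (LinearMap.ker f) = n := by
  have h1 : finrank F (LinearMap.range f) = 1 := by
    have hle : finrank F (LinearMap.range f) ≤ 1 := by
      simpa using Submodule.finrank_le (LinearMap.range f)
    have hne : LinearMap.range f ≠ ⊥ := by
      simpa [LinearMap.range_eq_bot] using hf
    have hpos : finrank F (LinearMap.range f) ≠ 0 := by
      intro h0
      exact hne (Submodule.finrank_eq_zero.mp h0)
    omega
  have h2 := LinearMap.finrank_range_add_finrank_ker f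
  rw [h1, finrank_pi] at h2
  simp at h2
  omega


lemma dotLin_ne_zero {n : ℕ} {v : Fin n → F} (hv : v ≠ 0) : dotLin v ≠ 0 := by
  obtain ⟨i, hi⟩ : ∃ i, v i ≠ 0 := by
    by_contra h
    push_neg at h
    exact hv (funext h)
  intro h0
  classical
  have : dotLin v (Pi.single i 1) = 0 := by rw [h0]; rfl
  rw [dotLin_apply, single_dotProduct, one_mul] at this
  exact hi this

/-- linear form on `F^{l+1}` giving the restriction of the codeword to the clique. -/
noncomputable def Lmap {l m : ℕ} (B : Matrix (Fin (l + 1)) (Fin m) F)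
    (a : {s : Finset (Fin m) // s.card = l} → F) : (Fin (l + 1) → F) →ₗ[F] F :=
  ∑ I : {s : Finset (Fin m) // s.card = l},
    a I • consDet ((B.submatrix id fun j : Fin l => ((I.1.orderIsoOfFin I.2 j : Fin m)))ᵀ)

lemma main_aux [Fintype F] {l m : ℕ} (B : Matrix (Fin (l + 1)) (Fin m) F)
    (M : Submodule F (Fin m → F) → Matrix (Fin l) (Fin m) F)
    (hM : ∀ W : Submodule F (Fin m → F), finrank F W = l → rowSpan F (M W) = W)
    (a : {s : Finset (Fin m) // s.card = l} → F)
    (W : Submodule F (Fin m → F)) (hWl : finrank F W = l) (hWT : W ≤ rowSpan F B) :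
    ∃ v : Fin (l + 1) → F, v ≠ 0 ∧
      Submodule.map B.vecMulLinear (LinearMap.ker (dotLin v)) = W ∧
      ((∑ I : {s : Finset (Fin m) // s.card = l}, a I * plucker F (M W) I = 0) ↔
        Lmap B a v = 0) := by
  classical
  set N := M W with hNdef
  have hN : rowSpan F N = W := hM W hWl
  have hrow : ∀ i, N i ∈ W := by
    intro i
    rw [← hN]
    exact Submodule.subset_span ⟨i, rfl⟩
  have hex : ∀ i, ∃ c : Fin (l + 1) → F, ∑ k, c k • B k = N i := fun i =>
    (Submodule.mem_span_range_iff_exists_fun F).mp (hWT (hrow i))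
  choose Cf hCf using hex
  set C : Matrix (Fin l) (Fin (l + 1)) F := Matrix.of Cf with hCdef
  have hNCB : N = C * B := by
    ext i j
    rw [Matrix.mul_apply]
    have := congr_fun (hCf i) j
    simpa [Finset.sum_apply, hCdef] using this.symm
  have hNrows : ∀ i, N i = B.vecMulLinear (C i) := by
    intro i
    funext j
    rw [hNCB]
    simp [Matrix.mul_apply, Matrix.vecMul, dotProduct]
  have hNind : LinearIndependent F (fun i => N i) := by
    rw [linearIndependent_iff_card_eq_finrank_span]
    have h1 : Submodule.span F (Set.range fun i => N i) = W := hN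
    rw [Set.finrank, h1, hWl, Fintype.card_fin]
  have hCind : LinearIndependent F (fun i => C i) :=
    LinearIndependent.of_comp B.vecMulLinear (by
      have : (⇑B.vecMulLinear ∘ fun i => C i) = fun i => N i :=
        funext fun i => (hNrows i).symm
      rw [this]
      exact hNind)
  have hnotinj : ¬ Function.Injective C.mulVecLin := by
    intro h
    have := LinearMap.finrank_le_finrank_of_injective h
    rw [finrank_pi, finrank_pi] at this
    simp at this
  obtain ⟨v, hvker, hvne⟩ : ∃ v, v ∈ LinearMap.ker C.mulVecLin ∧ v ≠ 0 := by
    rw [← LinearMap.ker_eq_bot] at hnotinj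
    exact (Submodule.ne_bot_iff _).mp hnotinj
  have hv : C.mulVec v = 0 := by
    simpa [Matrix.mulVecLin_apply] using hvker
  have hrowker : ∀ i, dotProduct (C i) v = 0 := by
    intro i
    have := congr_fun hv i
    simpa [Matrix.mulVec, dotProduct] using this
  have hdv : dotLin v ≠ 0 := dotLin_ne_zero hvne
  have hspanC : Submodule.span F (Set.range fun i => C i) = LinearMap.ker (dotLin v) := by
    apply Submodule.eq_of_le_of_finrank_eq
    · rw [Submodule.span_le]
      rintro _ ⟨i, rfl⟩
      show dotLin v (C i) = 0
      rw [dotLin_apply]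
      exact hrowker i
    · rw [finrank_span_eq_card hCind, Fintype.card_fin, finrank_ker_funct _ hdv]
  have hmap : Submodule.map B.vecMulLinear (LinearMap.ker (dotLin v)) = W := by
    rw [← hspanC, Submodule.map_span, ← Set.range_comp]
    have h2 : (⇑B.vecMulLinear ∘ fun i => C i) = fun i => N i :=
      funext fun i => (hNrows i).symm
    rw [h2]
    exact hN
  -- choose u outside the span of the rows of C
  have hCspanrank : finrank F (Submodule.span F (Set.range fun i => C i)) = l := by
    rw [finrank_span_eq_card hCind, Fintype.card_fin]
  obtain ⟨u, hu⟩ : ∃ u, u ∉ Submodule.span F (Set.range fun i => C i) := by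
    by_contra h
    push_neg at h
    have : Submodule.span F (Set.range fun i => C i) = ⊤ := Submodule.eq_top_iff'.mpr h
    rw [this, finrank_top, finrank_pi] at hCspanrank
    simp at hCspanrank
  set Chat : Matrix (Fin (l + 1)) (Fin (l + 1)) F := Matrix.of (Fin.cons u (fun i => C i))
    with hChatdef
  have hChatind : LinearIndependent F (fun i => Chat i) := by
    have h3 : (fun i => Chat i) = Fin.cons u (fun i => C i) := rfl
    rw [h3, linearIndependent_fin_cons]
    exact ⟨hCind, hu⟩
  have hChatunit : IsUnit Chat := Matrix.linearIndependent_rows_iff_isUnit.mp hChatind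
  have hChatdet : Chat.det ≠ 0 := ((Matrix.isUnit_iff_isUnit_det Chat).mp hChatunit).ne_zero
  have huv : dotProduct u v ≠ 0 := by
    intro h0
    have hinj := Matrix.mulVec_injective_iff_isUnit.mpr hChatunit
    have hchatv : Chat.mulVec v = Chat.mulVec 0 := by
      rw [Matrix.mulVec_zero]
      funext i
      show dotProduct (Chat i) v = 0
      induction i using Fin.cases with
      | zero => exact h0
      | succ i => exact hrowker i
    exact hvne (hinj hchatv)
  have hIdent : ∀ I : {s : Finset (Fin m) // s.card = l},
      dotProduct u v * plucker F N I =
        Chat.det *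
          consDet ((B.submatrix id fun j : Fin l => ((I.1.orderIsoOfFin I.2 j : Fin m)))ᵀ) v := by
    intro I
    have hsub : N.submatrix id (fun j : Fin l => ((I.1.orderIsoOfFin I.2 j : Fin m))) =
        C * B.submatrix id (fun j : Fin l => ((I.1.orderIsoOfFin I.2 j : Fin m))) := by
      ext i j
      rw [hNCB]
      simp [Matrix.mul_apply, Matrix.submatrix_apply]
    rw [plucker, hsub]
    exact block_det C u v _ hv
  have hSum : dotProduct u v *
      (∑ I : {s : Finset (Fin m) // s.card = l}, a I * plucker F N I) =
      Chat.det * Lmap B a v := by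
    rw [Finset.mul_sum]
    have hL : Lmap B a v = ∑ I : {s : Finset (Fin m) // s.card = l},
        a I * consDet ((B.submatrix id fun j : Fin l =>
          ((I.1.orderIsoOfFin I.2 j : Fin m)))ᵀ) v := by
      simp [Lmap, FunLike.coe_sum, Finset.sum_apply, LinearMap.smul_apply, smul_eq_mul]
    rw [hL, Finset.mul_sum]
    refine Finset.sum_congr rfl fun I _ => ?_
    rw [← mul_assoc, mul_comm (dotProduct u v) (a I), mul_assoc, hIdent I,
      ← mul_assoc, mul_comm (a I) Chat.det, mul_assoc]
  refine ⟨v, hvne, hmap, ?_⟩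
  constructor
  · intro h
    rw [h, mul_zero] at hSum
    exact (mul_eq_zero.mp hSum.symm).resolve_left hChatdet
  · intro h
    rw [h, mul_zero] at hSum
    exact (mul_eq_zero.mp hSum).resolve_left huv


lemma ker_dotLin_smul {n : ℕ} (v : Fin n → F) {c : F} (hc : c ≠ 0) :
    LinearMap.ker (dotLin (c • v)) = LinearMap.ker (dotLin v) := by
  ext u
  simp only [LinearMap.mem_ker, dotLin_apply, dotProduct_smul, smul_eq_mul]
  constructor
  · intro h
    rcases mul_eq_zero.mp h with h' | h'
    · exact absurd h' hc
    · exact h'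
  · intro h
    rw [h, mul_zero]

lemma vec_of_dotLin_eq {n : ℕ} {v w : Fin n → F} {c : F} (h : dotLin v = c • dotLin w) :
    v = c • w := by
  classical
  funext i
  have := congr_fun (congr_arg (DFunLike.coe) h) (Pi.single i 1)
  simpa [single_dotProduct] using this


end GrassmannAux

open Matrix in
/-- for a nonzero codeword of the Grassmann code `C(ℓ,m)` with support `Y`,
every top clique `⟨T] = { W ∈ G(ℓ,m) : W ≤ T }`, `T ∈ G(ℓ+1,m)`, meets `Y` in exactly `0`
or exactly `q^ℓ` points. -/
theorem top_clique_meets_support (F : Type*) [Field F] [Fintype F] {l m : ℕ}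
    (hl : 1 ≤ l) (hm : l ≤ m)
    (M : Submodule F (Fin m → F) → Matrix (Fin l) (Fin m) F)
    (hM : ∀ W : Submodule F (Fin m → F), finrank F W = l → rowSpan F (M W) = W)
    (a : {s : Finset (Fin m) // s.card = l} → F)
    (hnz : (grSupport F M a).Nonempty)
    (T : Submodule F (Fin m → F)) (hT : finrank F T = l + 1) :
    (grSupport F M a ∩ {W | W ≤ T}).ncard = 0 ∨
      (grSupport F M a ∩ {W | W ≤ T}).ncard = Fintype.card F ^ l := by
  classical
  -- a matrix whose rows form a basis of T
  let b : Basis (Fin (l + 1)) F T := Module.finBasisOfFinrankEq F T hT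
  set B : Matrix (Fin (l + 1)) (Fin m) F := Matrix.of (fun i => (b i : Fin m → F)) with hBdef
  have hBind : LinearIndependent F (fun i => B i) :=
    b.linearIndependent.map' T.subtype (Submodule.ker_subtype T)
  have hBT : rowSpan F B = T := by
    rw [rowSpan]
    have h1 : (Set.range fun i : Fin (l + 1) => B i) = T.subtype '' (Set.range b) := by
      rw [← Set.range_comp]
      rfl
    rw [h1, ← Submodule.map_span, b.span_eq, Submodule.map_subtype_top]
  set β := B.vecMulLinear with hβdef
  have hβinj : Function.Injective β := by
    rw [← LinearMap.ker_eq_bot, LinearMap.ker_eq_bot']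
    intro c hc
    have h0 : ∑ i, c i • B i = 0 := by
      funext j
      have := congr_fun hc j
      simpa [hβdef, Matrix.vecMulLinear_apply, Matrix.vecMul, dotProduct,
        Finset.sum_apply] using this
    funext i
    exact Fintype.linearIndependent_iff.mp hBind c h0 i
  set L := Lmap B a with hLdef
  by_cases hL : L = 0
  · left
    have hempty : grSupport F M a ∩ {W | W ≤ T} = ∅ := by
      ext W
      simp only [Set.mem_inter_iff, Set.mem_empty_iff_false, iff_false]
      rintro ⟨⟨hWl, hWs⟩, hWT⟩
      obtain ⟨v, hvne, -, hiff⟩ := main_aux B M hM a W hWl (by rw [hBT]; exact hWT)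
      exact hWs (hiff.mpr (by rw [← hLdef, hL]; rfl))
    rw [hempty, Set.ncard_empty]
  · right
    set S : Set (Submodule F (Fin m → F)) := grSupport F M a ∩ {W | W ≤ T} with hSdef
    set A : Set (Fin (l + 1) → F) := {v | L v ≠ 0} with hAdef
    set π : (Fin (l + 1) → F) → Submodule F (Fin m → F) :=
      fun v => Submodule.map β (LinearMap.ker (dotLin v)) with hπdef
    have hA_ne : ∀ v ∈ A, v ≠ 0 := by
      intro v hv h0
      apply hv
      rw [h0]
      exact map_zero L
    have hfr : ∀ v : Fin (l + 1) → F, v ≠ 0 → finrank F (π v) = l := by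
      intro v hv
      have e := Submodule.equivMapOfInjective β hβinj (LinearMap.ker (dotLin v))
      rw [hπdef, ← e.finrank_eq]
      exact finrank_ker_funct _ (dotLin_ne_zero hv)
    have hπT : ∀ v : Fin (l + 1) → F, π v ≤ T := by
      intro v
      have h1 : π v ≤ LinearMap.range β := LinearMap.map_le_range
      rw [hβdef, range_vecMulLinear] at h1
      have h2 : Submodule.span F (Set.range B.row) = T := hBT
      rwa [h2] at h1
    have hπS : ∀ v ∈ A, π v ∈ S := by
      intro v hvA
      have hvne := hA_ne v hvA
      have hπl : finrank F (π v) = l := hfr v hvne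
      obtain ⟨v₀, hv₀ne, hv₀map, hiff⟩ :=
        main_aux B M hM a (π v) hπl (by rw [hBT]; exact hπT v)
      have hkereq : LinearMap.ker (dotLin v₀) = LinearMap.ker (dotLin v) :=
        Submodule.map_injective_of_injective hβinj (by rw [hv₀map, hπdef])
      obtain ⟨c, hc, hgf⟩ := funct_prop hkereq (dotLin_ne_zero hv₀ne)
      have hveq : v = c • v₀ := vec_of_dotLin_eq hgf
      have hLv₀ : L v₀ ≠ 0 := by
        intro h0
        apply hvA
        show L v = 0
        rw [hveq, L.map_smul, h0, smul_zero]
      exact ⟨⟨hπl, fun h => hLv₀ (hiff.mp h)⟩, hπT v⟩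
    have hSv : ∀ W ∈ S, ∃ v, L v ≠ 0 ∧ π v = W := by
      intro W hWS
      obtain ⟨⟨hWl, hWs⟩, hWT⟩ := hWS
      obtain ⟨v, hvne, hvmap, hiff⟩ := main_aux B M hM a W hWl (by rw [hBT]; exact hWT)
      exact ⟨v, fun h0 => hWs (hiff.mpr h0), hvmap⟩
    choose sec hsec1 hsec2 using hSv
    -- the bijection
    set Φ : ↥S × {c : F // c ≠ 0} → ↥A := fun p =>
      ⟨p.2.1 • sec p.1.1 p.1.2, by
        show L _ ≠ 0
        rw [L.map_smul, smul_eq_mul]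
        exact mul_ne_zero p.2.2 (hsec1 p.1.1 p.1.2)⟩ with hΦdef
    have hπsmul : ∀ (v : Fin (l + 1) → F) (c : F), c ≠ 0 → π (c • v) = π v := by
      intro v c hc
      rw [hπdef]
      simp only
      rw [ker_dotLin_smul v hc]
    have hΦbij : Function.Bijective Φ := by
      constructor
      · rintro ⟨⟨W, hW⟩, ⟨c, hc⟩⟩ ⟨⟨W', hW'⟩, ⟨c', hc'⟩⟩ heq
        have hveq : c • sec W hW = c' • sec W' hW' := congr_arg Subtype.val heq
        have hWW : W = W' := by
          have h1 : π (c • sec W hW) = W := by rw [hπsmul _ _ hc, hsec2 W hW]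
          have h2 : π (c' • sec W' hW') = W' := by rw [hπsmul _ _ hc', hsec2 W' hW']
          rw [← h1, hveq, h2]
        subst hWW
        have hsne : sec W hW ≠ 0 := by
          intro h0
          apply hsec1 W hW
          rw [h0]
          exact map_zero L
        obtain ⟨i, hi⟩ : ∃ i, sec W hW i ≠ 0 := by
          by_contra h
          push_neg at h
          exact hsne (funext h)
        have : c * sec W hW i = c' * sec W hW i := by
          have := congr_fun hveq i
          simpa using this
        have hcc : c = c' := by
          exact mul_right_cancel₀ hi this
        simp [hcc]
      · rintro ⟨v, hvA⟩
        have hvS : π v ∈ S := hπS v hvA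
        have hkereq : LinearMap.ker (dotLin (sec (π v) hvS)) = LinearMap.ker (dotLin v) :=
          Submodule.map_injective_of_injective hβinj (hsec2 (π v) hvS)
        have hsne : sec (π v) hvS ≠ 0 := by
          intro h0
          apply hsec1 (π v) hvS
          rw [h0]
          exact map_zero L
        obtain ⟨c, hc, hgf⟩ := funct_prop hkereq (dotLin_ne_zero hsne)
        have hveq : v = c • sec (π v) hvS := vec_of_dotLin_eq hgf
        exact ⟨⟨⟨π v, hvS⟩, ⟨c, hc⟩⟩, by
          apply Subtype.ext
          exact hveq.symm⟩
    have hcard : Nat.card ↥S * Nat.card {c : F // c ≠ 0} = Nat.card ↥A := by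
      rw [← Nat.card_prod]
      exact Nat.card_eq_of_bijective Φ hΦbij
    -- card of the nonzero scalars
    have hCcard : Nat.card {c : F // c ≠ 0} = Fintype.card F - 1 := by
      have h1 : ({0} : Set F).ncard + (({0} : Set F)ᶜ).ncard = Nat.card F :=
        Set.ncard_add_ncard_compl {0}
      rw [Set.ncard_singleton, Nat.card_eq_fintype_card] at h1
      have h2 : Nat.card {c : F // c ≠ 0} = (({0} : Set F)ᶜ).ncard := by
        rw [← Nat.card_coe_set_eq]
        exact Nat.card_congr (Equiv.subtypeEquivRight (fun x => by simp))
      omega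
    -- card of A
    have hkerL : ((LinearMap.ker L : Submodule F (Fin (l + 1) → F)) :
        Set (Fin (l + 1) → F)).ncard = Fintype.card F ^ l := by
      have h0 : Nat.card ↥(LinearMap.ker L) = Fintype.card F ^ l := by
        rw [Nat.card_eq_fintype_card]
        have h1 : Fintype.card ↥(LinearMap.ker L) =
            Fintype.card F ^ finrank F ↥(LinearMap.ker L) := card_eq_pow_finrank
        rw [h1, finrank_ker_funct L hL]
      rw [← Nat.card_coe_set_eq]
      exact h0
    have hcompl := Set.ncard_add_ncard_compl
      ((LinearMap.ker L : Submodule F (Fin (l + 1) → F)) : Set (Fin (l + 1) → F))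
    have hAeq : A = ((LinearMap.ker L : Submodule F (Fin (l + 1) → F)) :
        Set (Fin (l + 1) → F))ᶜ := by
      ext v
      simp [hAdef, LinearMap.mem_ker]
    have htot : Nat.card (Fin (l + 1) → F) = Fintype.card F ^ (l + 1) := by
      rw [Nat.card_eq_fintype_card, Fintype.card_fun, Fintype.card_fin]
    have hAcard : Nat.card ↥A = Fintype.card F ^ (l + 1) - Fintype.card F ^ l := by
      rw [Nat.card_coe_set_eq, hAeq]
      omega
    -- finish
    have hq : 1 < Fintype.card F := Fintype.one_lt_card
    have hrhs : Fintype.card F ^ l * (Fintype.card F - 1) =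
        Fintype.card F ^ (l + 1) - Fintype.card F ^ l := by
      rw [Nat.mul_sub, mul_one, pow_succ]
    have key : Nat.card ↥S * (Fintype.card F - 1) =
        Fintype.card F ^ l * (Fintype.card F - 1) := by
      rw [hrhs, ← hAcard, ← hcard, hCcard]
    have : Nat.card ↥S = Fintype.card F ^ l :=
      Nat.eq_of_mul_eq_mul_right (by omega) key
    rw [← Nat.card_coe_set_eq]
    exact this
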